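/- Let φ_1, …, φ_N be bijections of ℝ^k × ℝ^k × ℝ, and for each j let Φ_j : ℝ^k × ℝ^k × ℝ → ℝ be a C¹ generating function for φ_j. Let v : ℝ^k → ℝ be C². For x = x_N ∈ ℝ^k and ξ = (x_0, …, x_{N−1}, y_1, …, y_N) ∈ (ℝ^k)^N × (ℝ^k)^N, define inductively z_0 = v(x_0) and z_j = z_{j−1} + ⟨y_j, x_j − x_{j−1}⟩ − Φ_j(x_{j−1}, y_j, z_{j−1}) for 1 ≤ j ≤ N, and set S(x; ξ) = v(x_0) + Σ_{j=1}^N ( ⟨y_j, x_j − x_{j−1}⟩ − Φ_j(x_{j−1}, y_j, z_{j−1}) ), i.e. S(x;ξ) = z_N. Then S is a generating family of the composition: { (x, ∂_xS(x;ξ), S(x;ξ)) : ∂_ξS(x;ξ) = 0 } = (φ_N ∘ ⋯ ∘ φ_1)( { (x_0, Dv(x_0), v(x_0)) : x_0 ∈ ℝ^k } ). -/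

import Mathlib

open RealInnerProductSpace Filter Topology

/-- The partial gradient of the Hamiltonian `H(t,x,y,z)` in the `x` variable. -/
noncomputable def pdx {k : ℕ}
    (H : ℝ → EuclideanSpace ℝ (Fin k) → EuclideanSpace ℝ (Fin k) → ℝ → ℝ)
    (t : ℝ) (x y : EuclideanSpace ℝ (Fin k)) (z : ℝ) : EuclideanSpace ℝ (Fin k) :=
  gradient (fun x' => H t x' y z) x

/-- The partial gradient of the Hamiltonian `H(t,x,y,z)` in the `y` variable. -/
noncomputable def pdy {k : ℕ}
    (H : ℝ → EuclideanSpace ℝ (Fin k) → EuclideanSpace ℝ (Fin k) → ℝ → ℝ)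
    (t : ℝ) (x y : EuclideanSpace ℝ (Fin k)) (z : ℝ) : EuclideanSpace ℝ (Fin k) :=
  gradient (fun y' => H t x y' z) y

/-- The partial derivative of the Hamiltonian `H(t,x,y,z)` in the `z` variable. -/
noncomputable def pdz {k : ℕ}
    (H : ℝ → EuclideanSpace ℝ (Fin k) → EuclideanSpace ℝ (Fin k) → ℝ → ℝ)
    (t : ℝ) (x y : EuclideanSpace ℝ (Fin k)) (z : ℝ) : ℝ :=
  deriv (fun z' => H t x y z') z

/-- The curve `τ ↦ (x τ, y τ, z τ)` solves the characteristic equations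
`ẋ = ∂_yH`, `ẏ = −∂_xH − (∂_zH) y`, `ż = ⟨y, ∂_yH⟩ − H` on the set `I`. -/
def IsCharSol {k : ℕ}
    (H : ℝ → EuclideanSpace ℝ (Fin k) → EuclideanSpace ℝ (Fin k) → ℝ → ℝ)
    (I : Set ℝ) (x y : ℝ → EuclideanSpace ℝ (Fin k)) (z : ℝ → ℝ) : Prop :=
  ∀ τ ∈ I,
    HasDerivAt x (pdy H τ (x τ) (y τ) (z τ)) τ ∧
    HasDerivAt y (-pdx H τ (x τ) (y τ) (z τ) - pdz H τ (x τ) (y τ) (z τ) • y τ) τ ∧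
    HasDerivAt z (⟪y τ, pdy H τ (x τ) (y τ) (z τ)⟫ - H τ (x τ) (y τ) (z τ)) τ

/-- `Φ(x,Y,z)` is a generating function for the contactomorphism `φ`. -/
def IsGenFun {k : ℕ}
    (Φ : EuclideanSpace ℝ (Fin k) → EuclideanSpace ℝ (Fin k) → ℝ → ℝ)
    (φ : EuclideanSpace ℝ (Fin k) × EuclideanSpace ℝ (Fin k) × ℝ →
      EuclideanSpace ℝ (Fin k) × EuclideanSpace ℝ (Fin k) × ℝ) : Prop :=
  (∀ x Y z, 1 - deriv (fun z' => Φ x Y z') z ≠ 0) ∧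
  ∀ x y z X Y Z,
    (X - x = gradient (fun Y' => Φ x Y' z) Y ∧
      Y - y = -gradient (fun x' => Φ x' Y z) x - deriv (fun z' => Φ x Y z') z • y ∧
      Z - z = ⟪Y, X - x⟫ - Φ x Y z)
    ↔ φ (x, y, z) = (X, Y, Z)

/-- The sequence `x_0, …, x_{N−1}, x_N = x`, padded: `Xc x xv j = x_j` for `j < N` and `x`
for `j = N`. -/
def Xc {k N : ℕ} (x : EuclideanSpace ℝ (Fin k)) (xv : Fin N → EuclideanSpace ℝ (Fin k))
    (j : ℕ) : EuclideanSpace ℝ (Fin k) :=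
  if h : j < N then xv ⟨j, h⟩ else x

/-- The sequence `y_1, …, y_N` (0-indexed): `Yc yv j = y_{j+1}`. -/
def Yc {k N : ℕ} (yv : Fin N → EuclideanSpace ℝ (Fin k)) (j : ℕ) :
    EuclideanSpace ℝ (Fin k) :=
  if h : j < N then yv ⟨j, h⟩ else 0

/-- The sequence of generating functions `Φ_1, …, Φ_N` (0-indexed). -/
def Φc {k N : ℕ}
    (Φ : Fin N → (EuclideanSpace ℝ (Fin k) → EuclideanSpace ℝ (Fin k) → ℝ → ℝ)) (j : ℕ) :
    EuclideanSpace ℝ (Fin k) → EuclideanSpace ℝ (Fin k) → ℝ → ℝ :=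
  if h : j < N then Φ ⟨j, h⟩ else fun _ _ _ => 0

/-- The inductively defined quantities `z_0 = v(x_0)`,
`z_j = z_{j−1} + ⟨y_j, x_j − x_{j−1}⟩ − Φ_j(x_{j−1}, y_j, z_{j−1})`.  In particular
`zrec Φ v x xv yv N` is the generating family `S(x; ξ)`, `ξ = (x_0,…,x_{N−1},y_1,…,y_N)`. -/
noncomputable def zrec {k N : ℕ}
    (Φ : Fin N → (EuclideanSpace ℝ (Fin k) → EuclideanSpace ℝ (Fin k) → ℝ → ℝ))
    (v : EuclideanSpace ℝ (Fin k) → ℝ) (x : EuclideanSpace ℝ (Fin k))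
    (xv yv : Fin N → EuclideanSpace ℝ (Fin k)) : ℕ → ℝ
  | 0 => v (Xc x xv 0)
  | j + 1 => zrec Φ v x xv yv j + ⟪Yc yv j, Xc x xv (j + 1) - Xc x xv j⟫ -
      Φc Φ j (Xc x xv j) (Yc yv j) (zrec Φ v x xv yv j)

/-- Iterated composition: `compAll φ N = φ_{N−1} ∘ ⋯ ∘ φ_0`. -/
def compAll {α : Type*} (φ : ℕ → (α → α)) : ℕ → (α → α)
  | 0 => id
  | j + 1 => φ j ∘ compAll φ j


namespace GenFam

lemma fderiv_triple_apply {k : ℕ}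
    (F : EuclideanSpace ℝ (Fin k) × EuclideanSpace ℝ (Fin k) × ℝ → ℝ)
    (hF : Differentiable ℝ F) (a b : EuclideanSpace ℝ (Fin k)) (c : ℝ)
    (u w : EuclideanSpace ℝ (Fin k)) (s : ℝ) :
    fderiv ℝ F (a, b, c) (u, w, s) =
      ⟪gradient (fun x' => F (x', b, c)) a, u⟫ + ⟪gradient (fun y' => F (a, y', c)) b, w⟫ +
        s * deriv (fun z' => F (a, b, z')) c := by
  set L := fderiv ℝ F (a, b, c) with hLdef
  have hL : HasFDerivAt F L (a, b, c) := (hF _).hasFDerivAt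
  have h1 : HasFDerivAt (fun x' => F (x', b, c))
      (L.comp ((ContinuousLinearMap.id ℝ _).prod 0)) a :=
    hL.comp a (HasFDerivAt.prodMk (hasFDerivAt_id a) (hasFDerivAt_const (b, c) a))
  have h2 : HasFDerivAt (fun y' => F (a, y', c))
      (L.comp ((0 : _ →L[ℝ] EuclideanSpace ℝ (Fin k)).prod
        ((ContinuousLinearMap.id ℝ _).prod 0))) b :=
    hL.comp b (HasFDerivAt.prodMk (hasFDerivAt_const a b) (HasFDerivAt.prodMk (hasFDerivAt_id b) (hasFDerivAt_const c b)))
  have h3 : HasFDerivAt (fun z' => F (a, b, z'))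
      (L.comp ((0 : _ →L[ℝ] EuclideanSpace ℝ (Fin k)).prod
        ((0 : _ →L[ℝ] EuclideanSpace ℝ (Fin k)).prod (ContinuousLinearMap.id ℝ ℝ)))) c :=
    hL.comp c (HasFDerivAt.prodMk (hasFDerivAt_const a c) (HasFDerivAt.prodMk (hasFDerivAt_const b c) (hasFDerivAt_id c)))
  have e1 : ⟪gradient (fun x' => F (x', b, c)) a, u⟫ = L (u, 0, 0) := by
    rw [h1.hasGradientAt.gradient]
    simp [InnerProductSpace.toDual_symm_apply]
    rfl
  have e2 : ⟪gradient (fun y' => F (a, y', c)) b, w⟫ = L (0, w, 0) := by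
    rw [h2.hasGradientAt.gradient]
    simp [InnerProductSpace.toDual_symm_apply]
  have e3 : deriv (fun z' => F (a, b, z')) c = L (0, 0, 1) := by
    rw [h3.hasDerivAt.deriv]
    simp
  rw [e1, e2, e3]
  have h4 : (u, w, s) = (u, (0:EuclideanSpace ℝ (Fin k)), (0:ℝ)) + (0, w, 0) + (0, 0, s) := by
    simp
  rw [h4, map_add, map_add]
  have h5 : ((0:EuclideanSpace ℝ (Fin k)), (0:EuclideanSpace ℝ (Fin k)), s)
      = s • ((0:EuclideanSpace ℝ (Fin k)), (0:EuclideanSpace ℝ (Fin k)), (1:ℝ)) := by simp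
  rw [h5, map_smul, smul_eq_mul]

variable {k N : ℕ}
  (Φ : Fin N → (EuclideanSpace ℝ (Fin k) → EuclideanSpace ℝ (Fin k) → ℝ → ℝ))
  (v : EuclideanSpace ℝ (Fin k) → ℝ)
  (x : EuclideanSpace ℝ (Fin k))
  (xv yv : Fin N → EuclideanSpace ℝ (Fin k))

/-- partial x-gradient of `Φ_j` at the `j`-th point of the discrete characteristic. -/
noncomputable def gx (j : ℕ) : EuclideanSpace ℝ (Fin k) :=
  gradient (fun x' => Φc Φ j x' (Yc yv j) (zrec Φ v x xv yv j)) (Xc x xv j)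

noncomputable def gy (j : ℕ) : EuclideanSpace ℝ (Fin k) :=
  gradient (fun Y' => Φc Φ j (Xc x xv j) Y' (zrec Φ v x xv yv j)) (Yc yv j)

noncomputable def dzf (j : ℕ) : ℝ :=
  deriv (fun z' => Φc Φ j (Xc x xv j) (Yc yv j) z') (zrec Φ v x xv yv j)

noncomputable def cc (j : ℕ) : ℝ := 1 - dzf Φ v x xv yv j

noncomputable def Pp (a b : ℕ) : ℝ := ∏ i ∈ Finset.Ico a b, cc Φ v x xv yv i

/-- the momentum entering step `j`. -/
noncomputable def ee (j : ℕ) : EuclideanSpace ℝ (Fin k) :=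
  if j = 0 then gradient v (Xc x xv 0) else Yc yv (j - 1)

noncomputable def Av (j : ℕ) : EuclideanSpace ℝ (Fin k) :=
  Xc x xv (j + 1) - Xc x xv j - gy Φ v x xv yv j

noncomputable def Bv (j : ℕ) : EuclideanSpace ℝ (Fin k) :=
  cc Φ v x xv yv j • ee v x xv yv j - Yc yv j - gx Φ v x xv yv j

noncomputable def valx (j m : ℕ) (w : EuclideanSpace ℝ (Fin k)) : ℝ :=
  if j < m then 0 else if j = m then ⟪ee v x xv yv m, w⟫
  else Pp Φ v x xv yv (m + 1) j * ⟪Bv Φ v x xv yv m, w⟫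

noncomputable def valy (j m : ℕ) (w : EuclideanSpace ℝ (Fin k)) : ℝ :=
  if j ≤ m then 0 else Pp Φ v x xv yv (m + 1) j * ⟪Av Φ v x xv yv m, w⟫

lemma zrec_fderiv (hN : 0 < N)
    (hΦC1 : ∀ j, ContDiff ℝ 1
      fun p : EuclideanSpace ℝ (Fin k) × EuclideanSpace ℝ (Fin k) × ℝ =>
        Φ j p.1 p.2.1 p.2.2)
    (hv : ContDiff ℝ 2 v) :
    ∀ j, j ≤ N → ∃ L : ((Fin N → EuclideanSpace ℝ (Fin k)) ×
        (Fin N → EuclideanSpace ℝ (Fin k))) →L[ℝ] ℝ,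
      HasFDerivAt (fun ξ : (Fin N → EuclideanSpace ℝ (Fin k)) ×
          (Fin N → EuclideanSpace ℝ (Fin k)) => zrec Φ v x ξ.1 ξ.2 j) L (xv, yv) ∧
      (∀ (m : Fin N) (w : EuclideanSpace ℝ (Fin k)),
        L (Pi.single m w, 0) = valx Φ v x xv yv j (↑m) w) ∧
      (∀ (m : Fin N) (w : EuclideanSpace ℝ (Fin k)),
        L (0, Pi.single m w) = valy Φ v x xv yv j (↑m) w) := by
  intro j
  induction j with
  | zero =>
    intro _
    refine ⟨((InnerProductSpace.toDual ℝ _) (gradient v (xv ⟨0, hN⟩))).comp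
      ((ContinuousLinearMap.proj (⟨0, hN⟩ : Fin N)).comp
        (ContinuousLinearMap.fst ℝ _ _)), ?_, ?_, ?_⟩
    · have h0 : HasFDerivAt v ((InnerProductSpace.toDual ℝ _) (gradient v (xv ⟨0, hN⟩)))
          (xv ⟨0, hN⟩) := ((hv.differentiable (by norm_num)) _).hasGradientAt.hasFDerivAt
      have h1 := h0.comp (xv, yv) (ContinuousLinearMap.hasFDerivAt
        ((ContinuousLinearMap.proj (⟨0, hN⟩ : Fin N)).comp
        (ContinuousLinearMap.fst ℝ (Fin N → EuclideanSpace ℝ (Fin k))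
          (Fin N → EuclideanSpace ℝ (Fin k)))))
      simp only [zrec, Xc, dif_pos hN]
      exact h1
    · intro m w
      simp only [ContinuousLinearMap.comp_apply, ContinuousLinearMap.coe_fst',
        ContinuousLinearMap.proj_apply, InnerProductSpace.toDual_apply_apply, valx]
      rcases eq_or_ne ((m : ℕ)) 0 with h | h
      · have hm : m = ⟨0, hN⟩ := by ext; simp [h]
        subst hm
        simp [Pi.single_apply, ee, Xc, dif_pos hN]
      · have : (Pi.single m w : Fin N → EuclideanSpace ℝ (Fin k)) ⟨0, hN⟩ = 0 := by
          rw [Pi.single_apply, if_neg]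
          intro hh; exact h (by simpa using congrArg Fin.val hh.symm)
        rw [this]
        simp [if_pos (Nat.pos_of_ne_zero h), inner_zero_right]
    · intro m w
      have : (0 : Fin N → EuclideanSpace ℝ (Fin k)) ⟨0, hN⟩ = 0 := rfl
      simp [valy, this, inner_zero_right]
  | succ j IH =>
    intro hj1
    have hj : j < N := hj1
    obtain ⟨L, hL, hLx, hLy⟩ := IH hj.le
    -- derivative of ξ ↦ Xc x ξ.1 j
    obtain ⟨DXj, hXj, hXjx, hXjy⟩ : ∃ D : ((Fin N → EuclideanSpace ℝ (Fin k)) ×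
        (Fin N → EuclideanSpace ℝ (Fin k))) →L[ℝ] EuclideanSpace ℝ (Fin k),
        HasFDerivAt (fun ξ : (Fin N → EuclideanSpace ℝ (Fin k)) ×
          (Fin N → EuclideanSpace ℝ (Fin k)) => Xc x ξ.1 j) D (xv, yv) ∧
        (∀ (m : Fin N) (w : EuclideanSpace ℝ (Fin k)),
          D (Pi.single m w, 0) = if (m : ℕ) = j then w else 0) ∧
        (∀ (m : Fin N) (w : EuclideanSpace ℝ (Fin k)), D (0, Pi.single m w) = 0) := by
      refine ⟨(ContinuousLinearMap.proj (⟨j, hj⟩ : Fin N)).comp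
        (ContinuousLinearMap.fst ℝ _ _), ?_, ?_, ?_⟩
      · simp only [Xc, dif_pos hj]
        exact ContinuousLinearMap.hasFDerivAt
          ((ContinuousLinearMap.proj (⟨j, hj⟩ : Fin N)).comp
            (ContinuousLinearMap.fst ℝ (Fin N → EuclideanSpace ℝ (Fin k))
              (Fin N → EuclideanSpace ℝ (Fin k))))
      · intro m w
        simp only [ContinuousLinearMap.comp_apply, ContinuousLinearMap.coe_fst',
          ContinuousLinearMap.proj_apply, Pi.single_apply]
        congr 1
        simp [Fin.ext_iff, eq_comm]
      · intro m w; rfl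
    -- derivative of ξ ↦ Yc ξ.2 j
    obtain ⟨DY, hYj, hYjx, hYjy⟩ : ∃ D : ((Fin N → EuclideanSpace ℝ (Fin k)) ×
        (Fin N → EuclideanSpace ℝ (Fin k))) →L[ℝ] EuclideanSpace ℝ (Fin k),
        HasFDerivAt (fun ξ : (Fin N → EuclideanSpace ℝ (Fin k)) ×
          (Fin N → EuclideanSpace ℝ (Fin k)) => Yc ξ.2 j) D (xv, yv) ∧
        (∀ (m : Fin N) (w : EuclideanSpace ℝ (Fin k)), D (Pi.single m w, 0) = 0) ∧
        (∀ (m : Fin N) (w : EuclideanSpace ℝ (Fin k)),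
          D (0, Pi.single m w) = if (m : ℕ) = j then w else 0) := by
      refine ⟨(ContinuousLinearMap.proj (⟨j, hj⟩ : Fin N)).comp
        (ContinuousLinearMap.snd ℝ _ _), ?_, ?_, ?_⟩
      · simp only [Yc, dif_pos hj]
        exact ContinuousLinearMap.hasFDerivAt
          ((ContinuousLinearMap.proj (⟨j, hj⟩ : Fin N)).comp
            (ContinuousLinearMap.snd ℝ (Fin N → EuclideanSpace ℝ (Fin k))
              (Fin N → EuclideanSpace ℝ (Fin k))))
      · intro m w; rfl
      · intro m w
        simp only [ContinuousLinearMap.comp_apply, ContinuousLinearMap.coe_snd',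
          ContinuousLinearMap.proj_apply, Pi.single_apply]
        congr 1
        simp [Fin.ext_iff, eq_comm]
    -- derivative of ξ ↦ Xc x ξ.1 (j+1)
    obtain ⟨DX1, hX1, hX1x, hX1y⟩ : ∃ D : ((Fin N → EuclideanSpace ℝ (Fin k)) ×
        (Fin N → EuclideanSpace ℝ (Fin k))) →L[ℝ] EuclideanSpace ℝ (Fin k),
        HasFDerivAt (fun ξ : (Fin N → EuclideanSpace ℝ (Fin k)) ×
          (Fin N → EuclideanSpace ℝ (Fin k)) => Xc x ξ.1 (j + 1)) D (xv, yv) ∧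
        (∀ (m : Fin N) (w : EuclideanSpace ℝ (Fin k)),
          D (Pi.single m w, 0) = if (m : ℕ) = j + 1 then w else 0) ∧
        (∀ (m : Fin N) (w : EuclideanSpace ℝ (Fin k)), D (0, Pi.single m w) = 0) := by
      by_cases h : j + 1 < N
      · refine ⟨(ContinuousLinearMap.proj (⟨j + 1, h⟩ : Fin N)).comp
          (ContinuousLinearMap.fst ℝ _ _), ?_, ?_, ?_⟩
        · simp only [Xc, dif_pos h]
          exact ContinuousLinearMap.hasFDerivAt
            ((ContinuousLinearMap.proj (⟨j + 1, h⟩ : Fin N)).comp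
              (ContinuousLinearMap.fst ℝ (Fin N → EuclideanSpace ℝ (Fin k))
                (Fin N → EuclideanSpace ℝ (Fin k))))
        · intro m w
          simp only [ContinuousLinearMap.comp_apply, ContinuousLinearMap.coe_fst',
            ContinuousLinearMap.proj_apply, Pi.single_apply]
          congr 1
          simp [Fin.ext_iff, eq_comm]
        · intro m w; rfl
      · refine ⟨0, ?_, ?_, ?_⟩
        · simp only [Xc, dif_neg h]
          exact hasFDerivAt_const x _
        · intro m w
          have : ¬((m : ℕ) = j + 1) := by have := m.2; omega
          simp [this]
        · intro m w; simp
    have hΦd : Differentiable ℝ (fun p : EuclideanSpace ℝ (Fin k) ×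
        EuclideanSpace ℝ (Fin k) × ℝ => Φ ⟨j, hj⟩ p.1 p.2.1 p.2.2) :=
      (hΦC1 ⟨j, hj⟩).differentiable one_ne_zero
    have hinner := hYj.inner ℝ (hX1.sub hXj)
    have hPhi := ((hΦd _).hasFDerivAt).comp (xv, yv) (hXj.prodMk (hYj.prodMk hL))
    refine ⟨L + (fderivInnerCLM ℝ (Yc yv j, Xc x xv (j + 1) - Xc x xv j)).comp
        (DY.prod (DX1 - DXj)) -
      (fderiv ℝ (fun p : EuclideanSpace ℝ (Fin k) × EuclideanSpace ℝ (Fin k) × ℝ =>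
          Φ ⟨j, hj⟩ p.1 p.2.1 p.2.2)
        (Xc x xv j, Yc yv j, zrec Φ v x xv yv j)).comp (DXj.prod (DY.prod L)), ?_, ?_, ?_⟩
    · simp only [zrec, Φc, dif_pos hj]
      exact (hL.add hinner).sub hPhi
    · intro m w
      have hm := m.2
      simp only [ContinuousLinearMap.add_apply, ContinuousLinearMap.sub_apply,
        ContinuousLinearMap.comp_apply, ContinuousLinearMap.prod_apply,
        fderivInnerCLM_apply, hLx, hXjx, hYjx, hX1x]
      rw [fderiv_triple_apply _ hΦd]
      beta_reduce
      have egx : gradient (fun x' => Φ ⟨j, hj⟩ x' (Yc yv j) (zrec Φ v x xv yv j))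
          (Xc x xv j) = gx Φ v x xv yv j := by
        simp only [gx, Φc, dif_pos hj]
      have egy : gradient (fun y' => Φ ⟨j, hj⟩ (Xc x xv j) y' (zrec Φ v x xv yv j))
          (Yc yv j) = gy Φ v x xv yv j := by
        simp only [gy, Φc, dif_pos hj]
      have edz : deriv (fun z' => Φ ⟨j, hj⟩ (Xc x xv j) (Yc yv j) z') (zrec Φ v x xv yv j)
          = dzf Φ v x xv yv j := by
        simp only [dzf, Φc, dif_pos hj]
      rw [egx, egy, edz]
      by_cases h1 : (m : ℕ) = j + 1
      · have h2 : ¬((m : ℕ) = j) := by omega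
        have e0 : valx Φ v x xv yv j (↑m) w = 0 := by
          rw [valx, if_pos (by omega)]
        have eR : valx Φ v x xv yv (j + 1) (↑m) w = ⟪Yc yv j, w⟫ := by
          rw [valx, if_neg (by omega), if_pos (by omega), h1]
          simp [ee]
        rw [e0, eR, if_pos h1, if_neg h2]
        simp
      · by_cases h2 : (m : ℕ) = j
        · have e0 : valx Φ v x xv yv j (↑m) w = ⟪ee v x xv yv j, w⟫ := by
            rw [valx, if_neg (by omega), if_pos h2.symm, h2]
          have eR : valx Φ v x xv yv (j + 1) (↑m) w = ⟪Bv Φ v x xv yv j, w⟫ := by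
            rw [valx, if_neg (by omega), if_neg (by omega), h2]
            have : Pp Φ v x xv yv (j + 1) (j + 1) = 1 := by
              rw [Pp, Finset.Ico_self, Finset.prod_empty]
            rw [this, one_mul]
          rw [e0, eR, if_neg h1, if_pos h2]
          simp only [Bv, cc, inner_sub_left, real_inner_smul_left, zero_sub,
            inner_neg_right, inner_zero_left, inner_zero_right]
          ring
        · by_cases h3 : (m : ℕ) < j
          · have e0 : valx Φ v x xv yv j (↑m) w
                = Pp Φ v x xv yv (↑m + 1) j * ⟪Bv Φ v x xv yv (↑m), w⟫ := by
              rw [valx, if_neg (by omega), if_neg (by omega)]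
            have eR : valx Φ v x xv yv (j + 1) (↑m) w
                = Pp Φ v x xv yv (↑m + 1) j * cc Φ v x xv yv j
                    * ⟪Bv Φ v x xv yv (↑m), w⟫ := by
              rw [valx, if_neg (by omega), if_neg (by omega), Pp, Pp,
                Finset.prod_Ico_succ_top (by omega : (m : ℕ) + 1 ≤ j)]
            rw [e0, eR, if_neg h1, if_neg h2]
            simp only [cc, inner_zero_left, inner_zero_right, sub_zero, sub_self]
            ring
          · have h4 : j + 1 < (m : ℕ) := by omega
            have e0 : valx Φ v x xv yv j (↑m) w = 0 := by
              rw [valx, if_pos (by omega)]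
            have eR : valx Φ v x xv yv (j + 1) (↑m) w = 0 := by
              rw [valx, if_pos (by omega)]
            rw [e0, eR, if_neg h1, if_neg h2]
            simp
    · intro m w
      have hm := m.2
      simp only [ContinuousLinearMap.add_apply, ContinuousLinearMap.sub_apply,
        ContinuousLinearMap.comp_apply, ContinuousLinearMap.prod_apply,
        fderivInnerCLM_apply, hLy, hXjy, hYjy, hX1y]
      rw [fderiv_triple_apply _ hΦd]
      beta_reduce
      have egx : gradient (fun x' => Φ ⟨j, hj⟩ x' (Yc yv j) (zrec Φ v x xv yv j))
          (Xc x xv j) = gx Φ v x xv yv j := by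
        simp only [gx, Φc, dif_pos hj]
      have egy : gradient (fun y' => Φ ⟨j, hj⟩ (Xc x xv j) y' (zrec Φ v x xv yv j))
          (Yc yv j) = gy Φ v x xv yv j := by
        simp only [gy, Φc, dif_pos hj]
      have edz : deriv (fun z' => Φ ⟨j, hj⟩ (Xc x xv j) (Yc yv j) z') (zrec Φ v x xv yv j)
          = dzf Φ v x xv yv j := by
        simp only [dzf, Φc, dif_pos hj]
      rw [egx, egy, edz]
      by_cases h1 : (m : ℕ) = j
      · have e0 : valy Φ v x xv yv j (↑m) w = 0 := by
          rw [valy, if_pos (by omega)]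
        have eR : valy Φ v x xv yv (j + 1) (↑m) w = ⟪Av Φ v x xv yv j, w⟫ := by
          rw [valy, if_neg (by omega), h1]
          have : Pp Φ v x xv yv (j + 1) (j + 1) = 1 := by
            rw [Pp, Finset.Ico_self, Finset.prod_empty]
          rw [this, one_mul]
        rw [e0, eR, if_pos h1]
        simp only [Av, inner_sub_left, sub_self, inner_zero_right, inner_zero_left,
          zero_add, add_zero, zero_mul, sub_zero, zero_sub]
        rw [real_inner_comm (Xc x xv (j + 1) - Xc x xv j) w, inner_sub_left]
      · by_cases h2 : (m : ℕ) < j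
        · have e0 : valy Φ v x xv yv j (↑m) w
              = Pp Φ v x xv yv (↑m + 1) j * ⟪Av Φ v x xv yv (↑m), w⟫ := by
            rw [valy, if_neg (by omega)]
          have eR : valy Φ v x xv yv (j + 1) (↑m) w
              = Pp Φ v x xv yv (↑m + 1) j * cc Φ v x xv yv j
                  * ⟪Av Φ v x xv yv (↑m), w⟫ := by
            rw [valy, if_neg (by omega), Pp, Pp,
              Finset.prod_Ico_succ_top (by omega : (m : ℕ) + 1 ≤ j)]
          rw [e0, eR, if_neg h1]
          simp only [cc, inner_zero_left, inner_zero_right, sub_zero, sub_self]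
          ring
        · have e0 : valy Φ v x xv yv j (↑m) w = 0 := by
            rw [valy, if_pos (by omega)]
          have eR : valy Φ v x xv yv (j + 1) (↑m) w = 0 := by
            rw [valy, if_pos (by omega)]
          rw [e0, eR, if_neg h1]
          simp

lemma cc_ne (hg : ∀ (j : Fin N) (X Y : EuclideanSpace ℝ (Fin k)) (z : ℝ),
      1 - deriv (fun z' => Φ j X Y z') z ≠ 0)
    {j : ℕ} (hj : j < N) : cc Φ v x xv yv j ≠ 0 := by
  simp only [cc, dzf, Φc, dif_pos hj]
  exact hg ⟨j, hj⟩ _ _ _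

lemma Pp_ne (hg : ∀ (j : Fin N) (X Y : EuclideanSpace ℝ (Fin k)) (z : ℝ),
      1 - deriv (fun z' => Φ j X Y z') z ≠ 0)
    {a b : ℕ} (hb : b ≤ N) : Pp Φ v x xv yv a b ≠ 0 := by
  rw [Pp]
  refine Finset.prod_ne_zero_iff.mpr fun i hi => ?_
  exact cc_ne Φ v x xv yv hg (lt_of_lt_of_le (Finset.mem_Ico.mp hi).2 hb)

lemma stationary_iff (hN : 0 < N)
    (hΦC1 : ∀ j, ContDiff ℝ 1
      fun p : EuclideanSpace ℝ (Fin k) × EuclideanSpace ℝ (Fin k) × ℝ =>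
        Φ j p.1 p.2.1 p.2.2)
    (hg : ∀ (j : Fin N) (X Y : EuclideanSpace ℝ (Fin k)) (z : ℝ),
      1 - deriv (fun z' => Φ j X Y z') z ≠ 0)
    (hv : ContDiff ℝ 2 v) :
    fderiv ℝ (fun ξ' : (Fin N → EuclideanSpace ℝ (Fin k)) ×
        (Fin N → EuclideanSpace ℝ (Fin k)) => zrec Φ v x ξ'.1 ξ'.2 N) (xv, yv) = 0 ↔
      ∀ m, m < N → Av Φ v x xv yv m = 0 ∧ Bv Φ v x xv yv m = 0 := by
  obtain ⟨L, hL, hLx, hLy⟩ := zrec_fderiv Φ v x xv yv hN hΦC1 hv N le_rfl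
  rw [hL.fderiv]
  constructor
  · intro h0 m hm
    have hx := hLx ⟨m, hm⟩ (Bv Φ v x xv yv m)
    have hy := hLy ⟨m, hm⟩ (Av Φ v x xv yv m)
    rw [h0] at hx hy
    simp only [ContinuousLinearMap.zero_apply] at hx hy
    rw [valx, if_neg (by omega), if_neg (by omega)] at hx
    rw [valy, if_neg (by omega)] at hy
    constructor
    · have := (mul_eq_zero.mp hy.symm).resolve_left (Pp_ne Φ v x xv yv hg le_rfl)
      exact inner_self_eq_zero.mp this
    · have := (mul_eq_zero.mp hx.symm).resolve_left (Pp_ne Φ v x xv yv hg le_rfl)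
      exact inner_self_eq_zero.mp this
  · intro hAB
    apply ContinuousLinearMap.ext
    intro d
    have h1 : L (d.1, 0) = 0 := by
      have hsum : (d.1, (0 : Fin N → EuclideanSpace ℝ (Fin k)))
          = ∑ i : Fin N, ((Pi.single i (d.1 i) : Fin N → EuclideanSpace ℝ (Fin k)),
            (0 : Fin N → EuclideanSpace ℝ (Fin k))) := by
        apply Prod.ext
        · rw [Prod.fst_sum]
          funext a
          rw [Finset.sum_apply]
          simp [Fintype.sum_pi_single]
        · simp [Prod.snd_sum]
      rw [hsum, map_sum]
      refine Finset.sum_eq_zero fun i _ => ?_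
      rw [hLx i (d.1 i), valx, if_neg (by have := i.2; omega),
        if_neg (by have := i.2; omega), (hAB i i.2).2]
      simp
    have h2 : L (0, d.2) = 0 := by
      have hsum : ((0 : Fin N → EuclideanSpace ℝ (Fin k)), d.2)
          = ∑ i : Fin N, ((0 : Fin N → EuclideanSpace ℝ (Fin k)),
            (Pi.single i (d.2 i) : Fin N → EuclideanSpace ℝ (Fin k))) := by
        apply Prod.ext
        · simp [Prod.fst_sum]
        · rw [Prod.snd_sum]
          funext a
          rw [Finset.sum_apply]
          simp [Fintype.sum_pi_single]
      rw [hsum, map_sum]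
      refine Finset.sum_eq_zero fun i _ => ?_
      rw [hLy i (d.2 i), valy, if_neg (by have := i.2; omega), (hAB i i.2).1]
      simp
    have hd : d = (d.1, (0 : Fin N → EuclideanSpace ℝ (Fin k)))
        + ((0 : Fin N → EuclideanSpace ℝ (Fin k)), d.2) := by
      apply Prod.ext <;> simp
    rw [ContinuousLinearMap.zero_apply]
    conv_lhs => rw [hd]
    rw [map_add, h1, h2, add_zero]

lemma zrec_indep : ∀ j, j < N → ∀ x' : EuclideanSpace ℝ (Fin k),
    zrec Φ v x' xv yv j = zrec Φ v x xv yv j := by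
  intro j
  induction j with
  | zero =>
    intro h x'
    simp [zrec, Xc, dif_pos h]
  | succ j IH =>
    intro h x'
    have hj : j < N := by omega
    have e1 : Xc x' xv (j + 1) = Xc x xv (j + 1) := by simp [Xc, dif_pos h]
    have e2 : Xc x' xv j = Xc x xv j := by simp [Xc, dif_pos hj]
    simp only [zrec]
    rw [e1, e2, IH hj x']

lemma zrec_grad_x (hN : 0 < N) :
    gradient (fun x' => zrec Φ v x' xv yv N) x = Yc yv (N - 1) := by
  obtain ⟨n, rfl⟩ : ∃ n, N = n + 1 := ⟨N - 1, by omega⟩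
  have hn : n < n + 1 := by omega
  have hfun : (fun x' => zrec Φ v x' xv yv (n + 1)) = fun x' =>
      ⟪Yc yv n, x'⟫ + (zrec Φ v x xv yv n - ⟪Yc yv n, Xc x xv n⟫
        - Φc Φ n (Xc x xv n) (Yc yv n) (zrec Φ v x xv yv n)) := by
    funext x'
    have e2 : Xc x' xv n = Xc x xv n := by simp [Xc, dif_pos hn]
    have e1 : Xc x' xv (n + 1) = x' := by simp [Xc]
    simp only [zrec]
    rw [zrec_indep Φ v x xv yv n hn x', e2, e1, inner_sub_right]
    ring
  rw [hfun]
  have hgrad : HasGradientAt (fun x' : EuclideanSpace ℝ (Fin k) =>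
      ⟪Yc yv n, x'⟫ + (zrec Φ v x xv yv n - ⟪Yc yv n, Xc x xv n⟫
        - Φc Φ n (Xc x xv n) (Yc yv n) (zrec Φ v x xv yv n))) (Yc yv n) x := by
    have h1 : HasFDerivAt (fun x' : EuclideanSpace ℝ (Fin k) => ⟪Yc yv n, x'⟫ + (zrec Φ v x xv yv n - ⟪Yc yv n, Xc x xv n⟫
        - Φc Φ n (Xc x xv n) (Yc yv n) (zrec Φ v x xv yv n)))
        (InnerProductSpace.toDual ℝ (EuclideanSpace ℝ (Fin k)) (Yc yv n)) x :=
      ((InnerProductSpace.toDual ℝ (EuclideanSpace ℝ (Fin k)) (Yc yv n)).hasFDerivAt).add_const _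
    have := h1.hasGradientAt
    simpa using this
  rw [hgrad.gradient]
  simp

lemma chain_forward
    (φ : Fin N → (EuclideanSpace ℝ (Fin k) × EuclideanSpace ℝ (Fin k) × ℝ →
      EuclideanSpace ℝ (Fin k) × EuclideanSpace ℝ (Fin k) × ℝ))
    (hgen : ∀ j, IsGenFun (Φ j) (φ j))
    (heq : ∀ m, m < N → Av Φ v x xv yv m = 0 ∧ Bv Φ v x xv yv m = 0) :
    ∀ j, j ≤ N → compAll (fun i => if h : i < N then φ ⟨i, h⟩ else id) j
        (Xc x xv 0, gradient v (Xc x xv 0), v (Xc x xv 0))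
      = (Xc x xv j, ee v x xv yv j, zrec Φ v x xv yv j) := by
  intro j
  induction j with
  | zero =>
    intro _
    simp [compAll, ee, zrec]
  | succ j IH =>
    intro hj1
    have hj : j < N := hj1
    have hstep : compAll (fun i => if h : i < N then φ ⟨i, h⟩ else id) (j + 1)
        (Xc x xv 0, gradient v (Xc x xv 0), v (Xc x xv 0))
        = φ ⟨j, hj⟩ (Xc x xv j, ee v x xv yv j, zrec Φ v x xv yv j) := by
      show (fun i => if h : i < N then φ ⟨i, h⟩ else id) j
        (compAll (fun i => if h : i < N then φ ⟨i, h⟩ else id) j _) = _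
      rw [IH hj.le]
      simp only [dif_pos hj]
    rw [hstep]
    have hA := (heq j hj).1
    have hB := (heq j hj).2
    have e1 : Xc x xv (j + 1) - Xc x xv j
        = gradient (fun Y' => Φ ⟨j, hj⟩ (Xc x xv j) Y' (zrec Φ v x xv yv j)) (Yc yv j) := by
      rw [← sub_eq_zero]
      have : gradient (fun Y' => Φ ⟨j, hj⟩ (Xc x xv j) Y' (zrec Φ v x xv yv j)) (Yc yv j)
          = gy Φ v x xv yv j := by simp only [gy, Φc, dif_pos hj]
      rw [this]
      exact hA
    have e2 : Yc yv j - ee v x xv yv j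
        = -gradient (fun x' => Φ ⟨j, hj⟩ x' (Yc yv j) (zrec Φ v x xv yv j)) (Xc x xv j)
          - deriv (fun z' => Φ ⟨j, hj⟩ (Xc x xv j) (Yc yv j) z') (zrec Φ v x xv yv j)
            • ee v x xv yv j := by
      have hgx : gradient (fun x' => Φ ⟨j, hj⟩ x' (Yc yv j) (zrec Φ v x xv yv j)) (Xc x xv j)
          = gx Φ v x xv yv j := by simp only [gx, Φc, dif_pos hj]
      have hdz : deriv (fun z' => Φ ⟨j, hj⟩ (Xc x xv j) (Yc yv j) z') (zrec Φ v x xv yv j)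
          = dzf Φ v x xv yv j := by simp only [dzf, Φc, dif_pos hj]
      rw [hgx, hdz]
      have hY : Yc yv j = cc Φ v x xv yv j • ee v x xv yv j - gx Φ v x xv yv j := by
        have := hB
        rw [Bv, sub_sub, sub_eq_zero] at this
        rw [this]
        abel
      rw [hY, cc, sub_smul, one_smul]
      abel
    have e3 : zrec Φ v x xv yv (j + 1) - zrec Φ v x xv yv j
        = ⟪Yc yv j, Xc x xv (j + 1) - Xc x xv j⟫
          - Φ ⟨j, hj⟩ (Xc x xv j) (Yc yv j) (zrec Φ v x xv yv j) := by
      simp only [zrec, Φc, dif_pos hj]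
      ring
    have hφ := ((hgen ⟨j, hj⟩).2 (Xc x xv j) (ee v x xv yv j) (zrec Φ v x xv yv j)
      (Xc x xv (j + 1)) (Yc yv j) (zrec Φ v x xv yv (j + 1))).mp ⟨e1, e2, e3⟩
    rw [hφ]
    have : ee v x xv yv (j + 1) = Yc yv j := by simp [ee]
    rw [this]

end GenFam

open GenFam in
/-- The family `S(x; ξ) = z_N` generates the image of the 1-jet of `v`
under the composition `φ_N ∘ ⋯ ∘ φ_1`:
`{(x, ∂_xS(x;ξ), S(x;ξ)) : ∂_ξS(x;ξ) = 0} = (φ_N ∘ ⋯ ∘ φ_1)(j¹v)`. -/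
theorem generating_family_of_composition {k N : ℕ} (hN : 0 < N)
    (φ : Fin N → (EuclideanSpace ℝ (Fin k) × EuclideanSpace ℝ (Fin k) × ℝ →
      EuclideanSpace ℝ (Fin k) × EuclideanSpace ℝ (Fin k) × ℝ))
    (hφbij : ∀ j, Function.Bijective (φ j))
    (Φ : Fin N → (EuclideanSpace ℝ (Fin k) → EuclideanSpace ℝ (Fin k) → ℝ → ℝ))
    (hΦC1 : ∀ j, ContDiff ℝ 1
      fun p : EuclideanSpace ℝ (Fin k) × EuclideanSpace ℝ (Fin k) × ℝ =>
        Φ j p.1 p.2.1 p.2.2)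
    (hgen : ∀ j, IsGenFun (Φ j) (φ j))
    (v : EuclideanSpace ℝ (Fin k) → ℝ) (hv : ContDiff ℝ 2 v) :
    {p : EuclideanSpace ℝ (Fin k) × EuclideanSpace ℝ (Fin k) × ℝ |
      ∃ (x : EuclideanSpace ℝ (Fin k))
        (ξ : (Fin N → EuclideanSpace ℝ (Fin k)) × (Fin N → EuclideanSpace ℝ (Fin k))),
        fderiv ℝ (fun ξ' : (Fin N → EuclideanSpace ℝ (Fin k)) ×
            (Fin N → EuclideanSpace ℝ (Fin k)) => zrec Φ v x ξ'.1 ξ'.2 N) ξ = 0 ∧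
        p = (x, gradient (fun x' => zrec Φ v x' ξ.1 ξ.2 N) x, zrec Φ v x ξ.1 ξ.2 N)} =
    compAll (fun j => if h : j < N then φ ⟨j, h⟩ else id) N ''
      {p : EuclideanSpace ℝ (Fin k) × EuclideanSpace ℝ (Fin k) × ℝ |
        ∃ x₀ : EuclideanSpace ℝ (Fin k), p = (x₀, gradient v x₀, v x₀)} := by
  have hg : ∀ (j : Fin N) (X Y : EuclideanSpace ℝ (Fin k)) (z : ℝ),
      1 - deriv (fun z' => Φ j X Y z') z ≠ 0 := fun j => (hgen j).1
  ext p
  simp only [Set.mem_setOf_eq, Set.mem_image]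
  constructor
  · rintro ⟨x, ⟨xv, yv⟩, hstat, rfl⟩
    have heq := (stationary_iff Φ v x xv yv hN hΦC1 hg hv).mp hstat
    refine ⟨(Xc x xv 0, gradient v (Xc x xv 0), v (Xc x xv 0)), ⟨Xc x xv 0, rfl⟩, ?_⟩
    rw [chain_forward Φ v x xv yv φ hgen heq N le_rfl]
    have hx : Xc x xv N = x := by simp [Xc]
    have hee : ee v x xv yv N = Yc yv (N - 1) := by
      simp only [ee]
      rw [if_neg (by omega)]
    rw [hx, hee, zrec_grad_x Φ v x xv yv hN]
  · rintro ⟨q, ⟨x₀, rfl⟩, rfl⟩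
    set P : ℕ → (EuclideanSpace ℝ (Fin k) × EuclideanSpace ℝ (Fin k) × ℝ) :=
      fun j => compAll (fun i => if h : i < N then φ ⟨i, h⟩ else id) j
        (x₀, gradient v x₀, v x₀) with hP
    set xe := (P N).1 with hxe
    set xve : Fin N → EuclideanSpace ℝ (Fin k) := fun m => (P m).1 with hxve
    set yve : Fin N → EuclideanSpace ℝ (Fin k) := fun m => (P (m + 1)).2.1 with hyve
    have hXce : ∀ j, j ≤ N → Xc xe xve j = (P j).1 := by
      intro j hj
      by_cases h : j < N
      · simp [Xc, dif_pos h, hxve]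
      · have hjN : j = N := by omega
        subst hjN
        simp [Xc, dif_neg h, hxe]
    have hYce : ∀ j, j < N → Yc yve j = (P (j + 1)).2.1 := by
      intro j hj
      simp [Yc, dif_pos hj, hyve]
    have hstepP : ∀ j (hj : j < N), P (j + 1) = φ ⟨j, hj⟩ (P j) := by
      intro j hj
      have h0 : P (j + 1) = (fun i => if h : i < N then φ ⟨i, h⟩ else id) j (P j) := rfl
      rw [h0]
      simp only [dif_pos hj]
    have hmain : ∀ j, j ≤ N →
        zrec Φ v xe xve yve j = (P j).2.2 ∧ ee v xe xve yve j = (P j).2.1 := by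
      intro j
      induction j with
      | zero =>
        intro _
        have h0 : Xc xe xve 0 = x₀ := by rw [hXce 0 (by omega)]; rfl
        constructor
        · simp only [zrec]
          rw [h0]
          rfl
        · simp only [ee, if_pos rfl]
          rw [h0]
          rfl
      | succ j IH =>
        intro hj1
        have hj : j < N := hj1
        obtain ⟨ihz, ihe⟩ := IH hj.le
        have hφe : φ ⟨j, hj⟩ ((P j).1, (P j).2.1, (P j).2.2)
            = ((P (j + 1)).1, (P (j + 1)).2.1, (P (j + 1)).2.2) := (hstepP j hj).symm
        obtain ⟨e1, e2, e3⟩ := ((hgen ⟨j, hj⟩).2 (P j).1 (P j).2.1 (P j).2.2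
          (P (j + 1)).1 (P (j + 1)).2.1 (P (j + 1)).2.2).mpr hφe
        constructor
        · simp only [zrec]
          rw [ihz, hXce j hj.le, hXce (j + 1) hj1, hYce j hj]
          simp only [Φc, dif_pos hj]
          linarith [e3]
        · simp only [ee, if_neg (by omega : ¬(j + 1 = 0)), Nat.add_sub_cancel]
          exact hYce j hj
    have hAB : ∀ m, m < N →
        Av Φ v xe xve yve m = 0 ∧ Bv Φ v xe xve yve m = 0 := by
      intro m hm
      have hφe : φ ⟨m, hm⟩ ((P m).1, (P m).2.1, (P m).2.2)
          = ((P (m + 1)).1, (P (m + 1)).2.1, (P (m + 1)).2.2) := (hstepP m hm).symm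
      obtain ⟨e1, e2, e3⟩ := ((hgen ⟨m, hm⟩).2 (P m).1 (P m).2.1 (P m).2.2
        (P (m + 1)).1 (P (m + 1)).2.1 (P (m + 1)).2.2).mpr hφe
      obtain ⟨ihz, ihe⟩ := hmain m hm.le
      constructor
      · rw [Av]
        have hgy : gy Φ v xe xve yve m
            = gradient (fun Y' => Φ ⟨m, hm⟩ ((P m).1) Y' ((P m).2.2)) ((P (m + 1)).2.1) := by
          simp only [gy, Φc, dif_pos hm]
          rw [hXce m hm.le, ihz, hYce m hm]
        rw [hgy, ← e1, hXce m hm.le, hXce (m + 1) (by omega)]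
        abel
      · rw [Bv]
        have hgx : gx Φ v xe xve yve m
            = gradient (fun x' => Φ ⟨m, hm⟩ x' ((P (m + 1)).2.1) ((P m).2.2)) ((P m).1) := by
          simp only [gx, Φc, dif_pos hm]
          rw [hXce m hm.le, ihz, hYce m hm]
        have hdz : dzf Φ v xe xve yve m
            = deriv (fun z' => Φ ⟨m, hm⟩ ((P m).1) ((P (m + 1)).2.1) z') ((P m).2.2) := by
          simp only [dzf, Φc, dif_pos hm]
          rw [hXce m hm.le, ihz, hYce m hm]
        rw [cc, hdz, hgx, ihe, hYce m hm]
        rw [sub_smul, one_smul]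
        set G := gradient (fun x' => Φ ⟨m, hm⟩ x' ((P (m + 1)).2.1) ((P m).2.2)) ((P m).1)
          with hG
        set D := deriv (fun z' => Φ ⟨m, hm⟩ ((P m).1) ((P (m + 1)).2.1) z') ((P m).2.2)
          with hD
        have hY : (P (m + 1)).2.1 = -G - D • (P m).2.1 + (P m).2.1 :=
          sub_eq_iff_eq_add.mp e2
        rw [hY]
        abel
    refine ⟨xe, (xve, yve), ?_, ?_⟩
    · exact (stationary_iff Φ v xe xve yve hN hΦC1 hg hv).mpr hAB
    · rw [zrec_grad_x Φ v xe xve yve hN]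
      have h1 : Yc yve (N - 1) = (P N).2.1 := by
        have h2 := hYce (N - 1) (by omega)
        have h3 : N - 1 + 1 = N := by omega
        rw [h3] at h2
        exact h2
      rw [h1, (hmain N le_rfl).1]
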